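/- Let λ, μ be real numbers, ε > 0, θ ∈ ℝ, and set A = max(1, ⌈2π(|λ|+|μ|)/ε⌉) and s = λ² + μ² + 2λμ·cos(θ). Then for every integer n ≥ A and every integer k with 1 ≤ k ≤ n-1 and gcd(k,n) = 1, there exists t ∈ ℤ such that λ·cos(k(θ + 2πt)/n) + μ·cos((n-k)(θ + 2πt)/n) ≥ √s − ε. -/

import Mathlib

set_option maxHeartbeats 1000000 in
theorem stmt_19 (l m : ℝ) (ε : ℝ) (hε : 0 < ε) (θ : ℝ)
    (A : ℤ) (hA : A = max 1 ⌈2 * Real.pi * (|l| + |m|) / ε⌉)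
    (s : ℝ) (hs : s = l ^ 2 + m ^ 2 + 2 * l * m * Real.cos θ)
    (n : ℤ) (hn : A ≤ n) (k : ℤ) (hk : 1 ≤ k) (hk' : k ≤ n - 1)
    (hgcd : Int.gcd k n = 1) :
    ∃ t : ℤ, Real.sqrt s - ε ≤
      l * Real.cos ((k : ℝ) * (θ + 2 * Real.pi * t) / n) +
        m * Real.cos (((n : ℝ) - k) * (θ + 2 * Real.pi * t) / n) := by
  have hπ := Real.pi_pos
  have hn1 : (1 : ℤ) ≤ n := le_trans (by rw [hA]; exact le_max_left _ _) hn
  have hnR : (0 : ℝ) < (n : ℝ) := by exact_mod_cast hn1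
  have hceil : (⌈2 * Real.pi * (|l| + |m|) / ε⌉ : ℤ) ≤ n :=
    le_trans (by rw [hA]; exact le_max_right _ _) hn
  have hbound : 2 * Real.pi * (|l| + |m|) ≤ ε * n := by
    have h1 := Int.le_ceil (2 * Real.pi * (|l| + |m|) / ε)
    have h2 : 2 * Real.pi * (|l| + |m|) / ε ≤ (n : ℝ) :=
      le_trans h1 (by exact_mod_cast hceil)
    have := mul_le_mul_of_nonneg_right h2 hε.le
    rw [div_mul_cancel₀ _ hε.ne'] at this
    linarith
  set a : ℝ := l + m * Real.cos θ with ha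
  set b : ℝ := m * Real.sin θ with hb
  have hab : a ^ 2 + b ^ 2 = s := by
    rw [hs, ha, hb]; nlinarith [Real.sin_sq_add_cos_sq θ]
  set c : ℂ := ⟨a, b⟩ with hc
  set y₀ : ℝ := c.arg with hy₀
  have hmax : a * Real.cos y₀ + b * Real.sin y₀ = Real.sqrt s := by
    by_cases h0 : c = 0
    · have ha0 : a = 0 := congrArg Complex.re h0
      have hb0 : b = 0 := congrArg Complex.im h0
      have hs0 : s = 0 := by rw [← hab, ha0, hb0]; ring
      simp [ha0, hb0, hs0]
    · have habs : ‖c‖ = Real.sqrt s := by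
        rw [Complex.norm_def, Complex.normSq_apply]
        have : c.re * c.re + c.im * c.im = s := by
          rw [← hab]; simp [hc]; ring
        rw [this]
      have hcos := Complex.cos_arg h0
      have hsin := Complex.sin_arg c
      have hR : ‖c‖ ≠ 0 := by
        simpa using (norm_ne_zero_iff.mpr h0)
      rw [hcos, hsin]
      have hre : c.re = a := rfl
      have him : c.im = b := rfl
      rw [hre, him]
      have hsq : a ^ 2 + b ^ 2 = (‖c‖) ^ 2 := by
        rw [Complex.sq_norm, Complex.normSq_apply, hre, him]; ring
      field_simp
      rw [habs] at hsq ⊢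
      nlinarith [hsq]
  -- choose j so that k*θ/n + 2πj/n is within π/n of y₀
  set x : ℝ := (y₀ - (k : ℝ) * θ / n) * n / (2 * Real.pi) with hx
  set j : ℤ := round x with hj
  set y : ℝ := (k : ℝ) * θ / n + 2 * Real.pi * j / n with hy
  have hclose : |y - y₀| ≤ Real.pi / n := by
    have hr : |(j : ℝ) - x| ≤ 1 / 2 := by
      rw [hj, abs_sub_comm]; exact abs_sub_round x
    have hyid : y - y₀ = ((j : ℝ) - x) * (2 * Real.pi / n) := by
      rw [hy, hx]; field_simp; ring
    rw [hyid, abs_mul]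
    rw [abs_of_pos (by positivity : (0:ℝ) < 2 * Real.pi / n)]
    calc |(j : ℝ) - x| * (2 * Real.pi / n) ≤ (1/2) * (2 * Real.pi / n) := by
          apply mul_le_mul_of_nonneg_right hr (by positivity)
      _ = Real.pi / n := by ring
  -- choose t with k * t ≡ j [ZMOD n]
  obtain ⟨u, v, huv⟩ := (Int.isCoprime_iff_gcd_eq_one.mpr hgcd)
  refine ⟨u * j, ?_⟩
  set t : ℤ := u * j with ht
  have hkt : k * t = j + n * (-(v * j)) := by
    rw [ht]; linear_combination j * huv
  set w : ℤ := -(v * j) with hw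
  -- the first angle
  have hang1 : (k : ℝ) * (θ + 2 * Real.pi * t) / n = y + (w : ℝ) * (2 * Real.pi) := by
    have hktR : (k : ℝ) * t = (j : ℝ) + (n : ℝ) * (w : ℝ) := by exact_mod_cast hkt
    rw [hy]
    field_simp
    linear_combination (2 * Real.pi) * hktR
  have hang2 : ((n : ℝ) - k) * (θ + 2 * Real.pi * t) / n
      = (θ - y) + ((t : ℝ) - w) * (2 * Real.pi) := by
    have hktR : (k : ℝ) * t = (j : ℝ) + (n : ℝ) * (w : ℝ) := by exact_mod_cast hkt
    rw [hy]
    field_simp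
    linear_combination (-(2 * Real.pi)) * hktR
  rw [hang1, hang2]
  have hcos1 : Real.cos (y + (w : ℝ) * (2 * Real.pi)) = Real.cos y := by
    simpa using Real.cos_add_int_mul_two_pi y w
  have hcos2 : Real.cos ((θ - y) + ((t : ℝ) - w) * (2 * Real.pi)) = Real.cos (θ - y) := by
    have : ((t : ℝ) - w) = ((t - w : ℤ) : ℝ) := by push_cast; ring
    rw [this]
    simpa using Real.cos_add_int_mul_two_pi (θ - y) (t - w)
  rw [hcos1, hcos2]
  -- now show √s - ε ≤ l cos y + m cos (θ - y)
  have hgmax : l * Real.cos y₀ + m * Real.cos (θ - y₀) = Real.sqrt s := by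
    rw [← hmax, Real.cos_sub, ha, hb]; ring
  have hlip : ∀ p q : ℝ, |Real.cos p - Real.cos q| ≤ |p - q| := by
    intro p q
    rw [Real.cos_sub_cos, abs_mul, abs_mul]
    have h2 := Real.abs_sin_le_one ((p + q) / 2)
    have h3 := Real.abs_sin_le_abs (x := (p - q) / 2)
    have h4 : |(p - q) / 2| = |p - q| / 2 := by
      rw [abs_div]; norm_num
    have h5 : |(-2 : ℝ)| = 2 := by norm_num
    rw [h5]
    rw [h4] at h3
    have h6 := mul_le_mul h2 h3 (abs_nonneg _) (by norm_num : (0:ℝ) ≤ 1)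
    linarith
  have hlip1 : |Real.cos y - Real.cos y₀| ≤ |y - y₀| := hlip y y₀
  have hlip2 : |Real.cos (θ - y) - Real.cos (θ - y₀)| ≤ |y - y₀| := by
    have := hlip (θ - y) (θ - y₀)
    rwa [show (θ - y) - (θ - y₀) = -(y - y₀) by ring, abs_neg] at this
  have hdiff : |(l * Real.cos y + m * Real.cos (θ - y)) -
      (l * Real.cos y₀ + m * Real.cos (θ - y₀))| ≤ (|l| + |m|) * (Real.pi / n) := by
    calc |(l * Real.cos y + m * Real.cos (θ - y)) -
        (l * Real.cos y₀ + m * Real.cos (θ - y₀))|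
        = |l * (Real.cos y - Real.cos y₀) + m * (Real.cos (θ - y) - Real.cos (θ - y₀))| := by
          ring_nf
      _ ≤ |l * (Real.cos y - Real.cos y₀)| + |m * (Real.cos (θ - y) - Real.cos (θ - y₀))| :=
          abs_add_le _ _
      _ = |l| * |Real.cos y - Real.cos y₀| + |m| * |Real.cos (θ - y) - Real.cos (θ - y₀)| := by
          rw [abs_mul, abs_mul]
      _ ≤ |l| * |y - y₀| + |m| * |y - y₀| := by
          gcongr
      _ = (|l| + |m|) * |y - y₀| := by ring
      _ ≤ (|l| + |m|) * (Real.pi / n) := by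
          apply mul_le_mul_of_nonneg_left hclose (by positivity)
  have hfin : (|l| + |m|) * (Real.pi / n) ≤ ε := by
    have hnn : (0 : ℝ) ≤ (|l| + |m|) * Real.pi :=
      mul_nonneg (add_nonneg (abs_nonneg l) (abs_nonneg m)) hπ.le
    have h1 : (|l| + |m|) * Real.pi ≤ ε * n := by linarith
    rw [← mul_div_assoc, div_le_iff₀ hnR]
    linarith
  have h2 := (abs_sub_le_iff.mp hdiff).2
  linarith [hfin, hgmax]
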